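/- Let n be a nonnegative integer, I a nontrivial interval of ℝ, f : I → ℝ a C^n function, and p ∈ I. For k = 0,…,n write P_k for the platform of D^k f containing p. Then P_0 ⊆ P_1 ⊆ ⋯ ⊆ P_n; more precisely, there is an initial segment A ⊆ {0,…,n} and a closed subinterval P of I of positive length such that P_k = {p} for k ∈ A and P_k = P for k ∉ A. -/

import Mathlib

open Set MeasureTheory

/-- `K` is closed and discrete in `I`: every point of `I` has a punctured
neighborhood missing `K`. -/
def ClosedDiscreteIn (K I : Set ℝ) : Prop :=
  K ⊆ I ∧ ∀ x ∈ I, ∃ ε > 0, ∀ y ∈ K, |y - x| < ε → y = x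

/-- `f` is (non-strictly) monotone on `S`. -/
def MonoOn (f : ℝ → ℝ) (S : Set ℝ) : Prop :=
  MonotoneOn f S ∨ AntitoneOn f S

/-- `K` witnesses the piecewise monotonicity of `f` on `I`. -/
def Witnesses (f : ℝ → ℝ) (I K : Set ℝ) : Prop :=
  ClosedDiscreteIn K I ∧
    ∀ x ∈ I \ K, MonoOn f (connectedComponentIn (I \ K) x)

/-- `f` is piecewise monotone on `I`. -/
def PiecewiseMonotoneOn (f : ℝ → ℝ) (I : Set ℝ) : Prop :=
  ∃ K, Witnesses f I K

/-- The platform of `f` containing `p`: the connected component of the fiber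
of `f` (within `I`) containing `p`. -/
def Platform (f : ℝ → ℝ) (I : Set ℝ) (p : ℝ) : Set ℝ :=
  connectedComponentIn {x ∈ I | f x = f p} p

/-- `P` is a platform of `f` on `I`. -/
def IsPlatform (f : ℝ → ℝ) (I P : Set ℝ) : Prop :=
  ∃ p ∈ I, P = Platform f I p

/-- `P` is a turning platform of `f` on `I`. -/
def IsTurningPlatform (f : ℝ → ℝ) (I P : Set ℝ) : Prop :=
  IsPlatform f I P ∧
  ∃ a b c ε, a ≤ b ∧ P = Icc a b ∧ (∀ x ∈ P, f x = c) ∧ 0 < ε ∧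
    Ioo (a - ε) (b + ε) ⊆ I ∧
    ((∀ x ∈ Ioo (a - ε) (b + ε) \ P, c < f x) ∨
     (∀ x ∈ Ioo (a - ε) (b + ε) \ P, f x < c))

/-- `x` is a turning point of `f` on `I`. -/
def IsTurningPoint (f : ℝ → ℝ) (I : Set ℝ) (x : ℝ) : Prop :=
  ∃ P, IsTurningPlatform f I P ∧ x ∈ P

private lemma interior_nonempty_of_nontrivial' {s : Set ℝ} (hs : s.OrdConnected)
    (h : s.Nontrivial) : (interior s).Nonempty := by
  obtain ⟨a, ha, b, hb, hne⟩ := h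
  rcases hne.lt_or_gt with hlt | hlt
  · exact (nonempty_Ioo.2 hlt).mono
      (interior_maximal (Ioo_subset_Icc_self.trans (hs.out ha hb)) isOpen_Ioo)
  · exact (nonempty_Ioo.2 hlt).mono
      (interior_maximal (Ioo_subset_Icc_self.trans (hs.out hb ha)) isOpen_Ioo)

private lemma derivWithin_zero_on_const' {g : ℝ → ℝ} {I S : Set ℝ}
    (hg : DifferentiableOn ℝ g I) (hSI : S ⊆ I) (hS : S.OrdConnected)
    (hSnt : S.Nontrivial) {c : ℝ} (hc : ∀ x ∈ S, g x = c) :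
    ∀ x ∈ S, derivWithin g I x = 0 := by
  have hUD : UniqueDiffOn ℝ S :=
    uniqueDiffOn_convex hS.convex (interior_nonempty_of_nontrivial' hS hSnt)
  intro x hx
  have h1 : HasDerivWithinAt g (derivWithin g I x) S x :=
    ((hg x (hSI hx)).hasDerivWithinAt).mono hSI
  have h2 : HasDerivWithinAt g 0 S x :=
    (hasDerivWithinAt_const x S c).congr (fun y hy => hc y hy) (hc x hx)
  rw [← h1.derivWithin (hUD x hx), h2.derivWithin (hUD x hx)]

private lemma const_of_derivWithin_zero' {g : ℝ → ℝ} {I S : Set ℝ}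
    (hg : DifferentiableOn ℝ g I) (hSI : S ⊆ I) (hS : S.OrdConnected)
    (h0 : ∀ x ∈ S, derivWithin g I x = 0) :
    ∀ x ∈ S, ∀ y ∈ S, g x = g y := by
  intro x hx y hy
  have hd : ∀ z ∈ S, HasDerivWithinAt g ((fun _ => (0 : ℝ)) z) S z := fun z hz => by
    have := (hg z (hSI hz)).hasDerivWithinAt.mono hSI
    rwa [h0 z hz] at this
  have hb := hS.convex.norm_image_sub_le_of_norm_hasDerivWithin_le (C := 0) hd
    (fun z _ => by simp) hy hx
  have : ‖g x - g y‖ ≤ 0 := by simpa using hb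
  exact sub_eq_zero.mp (norm_le_zero_iff.mp this)

/-- The platforms of the successive derivatives of a `C^n` function at a point
form an increasing chain: they are `{p}` on an initial segment and equal to a
fixed closed subinterval `P` of positive length afterwards. -/
theorem platforms_of_derivatives_chain
    (n : ℕ) (I : Set ℝ) (hI : I.OrdConnected) (hnt : I.Nontrivial)
    (f : ℝ → ℝ) (hf : ContDiffOn ℝ n f I) (p : ℝ) (hp : p ∈ I) :
    (∀ k < n, Platform (iteratedDerivWithin k f I) I p ⊆
      Platform (iteratedDerivWithin (k + 1) f I) I p) ∧
    ∃ m ≤ n + 1,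
      (∀ k < m, Platform (iteratedDerivWithin k f I) I p = {p}) ∧
      (m ≤ n → ∃ P, P ⊆ I ∧ P.OrdConnected ∧ P.Nontrivial ∧
        ∀ k, m ≤ k → k ≤ n → Platform (iteratedDerivWithin k f I) I p = P) := by
  classical
  set D : ℕ → ℝ → ℝ := fun k => iteratedDerivWithin k f I with hD
  set Pl : ℕ → Set ℝ := fun k => Platform (D k) I p with hPl
  have hUDI : UniqueDiffOn ℝ I :=
    uniqueDiffOn_convex hI.convex (interior_nonempty_of_nontrivial' hI hnt)
  have memPl : ∀ k, p ∈ Pl k := fun k =>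
    mem_connectedComponentIn ⟨hp, rfl⟩
  have PlsubI : ∀ k, Pl k ⊆ I := fun k =>
    (connectedComponentIn_subset _ _).trans (sep_subset _ _)
  have Plconst : ∀ k, ∀ x ∈ Pl k, D k x = D k p := fun k x hx =>
    (connectedComponentIn_subset _ _ hx).2
  have Plord : ∀ k, (Pl k).OrdConnected := fun k =>
    (isPreconnected_connectedComponentIn).ordConnected
  have hdiff : ∀ k < n, DifferentiableOn ℝ (D k) I := fun k hk =>
    hf.differentiableOn_iteratedDerivWithin (by exact_mod_cast hk) hUDI
  have hsucc : ∀ k, ∀ x ∈ I, D (k + 1) x = derivWithin (D k) I x := fun k x hx =>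
    congrFun iteratedDerivWithin_succ x
  -- key fact: if `Pl k` is nontrivial and `k < n`, then `D (k+1)` vanishes on `Pl k`
  have step1 : ∀ k < n, (Pl k).Nontrivial → ∀ x ∈ Pl k, D (k + 1) x = 0 := by
    intro k hk hknt x hx
    rw [hsucc k x (PlsubI k hx)]
    exact derivWithin_zero_on_const' (hdiff k hk) (PlsubI k) (Plord k) hknt
      (c := D k p) (Plconst k) x hx
  -- subsingleton platforms are `{p}`
  have singl : ∀ k, ¬ (Pl k).Nontrivial → Pl k = {p} := fun k h =>
    (not_nontrivial_iff.mp h).eq_singleton_of_mem (memPl k)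
  -- the chain of inclusions
  have chainsub : ∀ k < n, Pl k ⊆ Pl (k + 1) := by
    intro k hk
    by_cases h : (Pl k).Nontrivial
    · have hsub : Pl k ⊆ {x ∈ I | D (k + 1) x = D (k + 1) p} := by
        intro x hx
        refine ⟨PlsubI k hx, ?_⟩
        rw [step1 k hk h x hx, step1 k hk h p (memPl k)]
      exact isPreconnected_connectedComponentIn.subset_connectedComponentIn
        (memPl k) hsub
    · rw [singl k h]
      exact singleton_subset_iff.mpr (memPl (k + 1))
  -- stabilization: once nontrivial, the platform doesn't change
  have step2 : ∀ k < n, (Pl k).Nontrivial → Pl (k + 1) = Pl k := by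
    intro k hk h
    refine subset_antisymm ?_ (chainsub k hk)
    have hzp : D (k + 1) p = 0 := step1 k hk h p (memPl k)
    have h0 : ∀ x ∈ Pl (k + 1), derivWithin (D k) I x = 0 := by
      intro x hx
      rw [← hsucc k x (PlsubI (k + 1) hx), Plconst (k + 1) x hx, hzp]
    have hconst : ∀ x ∈ Pl (k + 1), D k x = D k p := fun x hx =>
      const_of_derivWithin_zero' (hdiff k hk) (PlsubI (k + 1)) (Plord (k + 1))
        h0 x hx p (memPl (k + 1))
    exact isPreconnected_connectedComponentIn.subset_connectedComponentIn
      (memPl (k + 1)) (fun x hx => ⟨PlsubI (k + 1) hx, hconst x hx⟩)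
  refine ⟨chainsub, ?_⟩
  by_cases hex : ∃ k, k ≤ n ∧ (Pl k).Nontrivial
  · set m := Nat.find hex with hm
    have hspec := Nat.find_spec hex
    refine ⟨m, hspec.1.trans (Nat.le_succ n), ?_, ?_⟩
    · intro k hkm
      refine singl k fun hnt' => ?_
      exact Nat.find_min hex hkm ⟨(le_of_lt hkm).trans hspec.1, hnt'⟩
    · intro _
      refine ⟨Pl m, PlsubI m, Plord m, hspec.2, ?_⟩
      intro k hk
      induction k, hk using Nat.le_induction with
      | base => intro _; rfl
      | succ k hmk ih =>
        intro hk1n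
        show Pl (k + 1) = Pl m
        have hkn : k < n := hk1n
        have hPk : Pl k = Pl m := ih (le_of_lt hkn)
        rw [step2 k hkn (hPk ▸ hspec.2), hPk]
  · push_neg at hex
    refine ⟨n + 1, le_rfl, ?_, ?_⟩
    · intro k hk
      exact singl k (not_nontrivial_iff.mpr (hex k (Nat.lt_succ_iff.mp hk)))
    · intro h
      exact absurd h (Nat.not_succ_le_self n)
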